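/- Let n ≥ 0, let A be a nonempty finite set of points of ℤ^{n+1}, let v : A → ℝ, and define trop(F) : ℝ^{n+1} → ℝ by trop(F)(X) = max_{m∈A}(v(m) + ⟨m, X⟩). For X ∈ ℝ^{n+1} let A_X := {m ∈ A : v(m) + ⟨m, X⟩ = trop(F)(X)} be the set of maximizers. Assume that A_X is affinely independent (as a subset of ℝ^{n+1}) for every X ∈ ℝ^{n+1}. Then for every X₀ ∈ ℝ^{n+1}, the affine span of the set μ := {X ∈ ℝ^{n+1} : A_X = A_{X₀}} has dimension n + 2 − |A_{X₀}|. Equivalently, a k-dimensional cell μ of the dual polyhedral decomposition satisfies |A_μ| = n + 2 − k. -/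

import Mathlib

/-- Mikhalkin's dimension count: for a smooth tropical hypersurface (all maximizer
sets affinely independent), the cell `{X | A_X = A_{X₀}}` has affine span of
dimension `n + 2 - |A_{X₀}|`. -/
theorem stmt_1 (n : ℕ) (A : Finset (Fin (n + 1) → ℤ)) (hA : A.Nonempty)
    (v : (Fin (n + 1) → ℤ) → ℝ)
    (trop : (Fin (n + 1) → ℝ) → ℝ)
    (htrop : ∀ X, trop X = A.sup' hA fun m => v m + ∑ i, (m i : ℝ) * X i)
    (AX : (Fin (n + 1) → ℝ) → Finset (Fin (n + 1) → ℤ))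
    (hAX : ∀ X, AX X = A.filter fun m => v m + ∑ i, (m i : ℝ) * X i = trop X)
    (hindep : ∀ X, AffineIndependent ℝ
      (fun m : (AX X : Set (Fin (n + 1) → ℤ)) => fun i => ((m : Fin (n + 1) → ℤ) i : ℝ))) :
    ∀ X₀ : Fin (n + 1) → ℝ,
      Module.finrank ℝ
          (affineSpan ℝ {X : Fin (n + 1) → ℝ | AX X = AX X₀}).direction
        = n + 2 - (AX X₀).card := by
  classical
  intro X₀
  set S : Finset (Fin (n + 1) → ℤ) := AX X₀ with hS
  have hmem : ∀ X m, m ∈ AX X ↔ m ∈ A ∧ v m + ∑ i, (m i : ℝ) * X i = trop X := by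
    intro X m; rw [hAX X, Finset.mem_filter]
  have hle : ∀ X, ∀ m ∈ A, v m + ∑ i, (m i : ℝ) * X i ≤ trop X := by
    intro X m hm; rw [htrop]
    exact Finset.le_sup' (fun m => v m + ∑ i, (m i : ℝ) * X i) hm
  have hSne : S.Nonempty := by
    obtain ⟨m, hm, hsup⟩ := Finset.exists_mem_eq_sup' hA
      (fun m => v m + ∑ i, (m i : ℝ) * X₀ i)
    exact ⟨m, (hmem X₀ m).mpr ⟨hm, by rw [htrop X₀, hsup]⟩⟩
  obtain ⟨m₀, hm₀⟩ := hSne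
  have hSne' : S.Nonempty := ⟨m₀, hm₀⟩
  have hm₀A : m₀ ∈ A := ((hmem X₀ m₀).mp hm₀).1
  have hm₀max : v m₀ + ∑ i, (m₀ i : ℝ) * X₀ i = trop X₀ := ((hmem X₀ m₀).mp hm₀).2
  -- linear functionals
  set φ : (Fin (n + 1) → ℤ) → ((Fin (n + 1) → ℝ) →ₗ[ℝ] ℝ) :=
    fun m => ∑ i, ((m i : ℝ) - (m₀ i : ℝ)) • LinearMap.proj i with hφdef
  have hφ : ∀ m X, φ m X = ∑ i, ((m i : ℝ) - (m₀ i : ℝ)) * X i := by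
    intro m X
    simp [hφdef, LinearMap.sum_apply, LinearMap.smul_apply, smul_eq_mul]
  set K : Submodule ℝ (Fin (n + 1) → ℝ) := ⨅ m ∈ S, LinearMap.ker (φ m) with hK
  have memK : ∀ Y, Y ∈ K ↔ ∀ m ∈ S, φ m Y = 0 := by
    intro Y; simp [hK, Submodule.mem_iInf, LinearMap.mem_ker]
  have hkey : ∀ (m : Fin (n + 1) → ℤ) (X : Fin (n + 1) → ℝ),
      φ m (X - X₀) = ((∑ i, (m i : ℝ) * X i) - ∑ i, (m₀ i : ℝ) * X i)
        - ((∑ i, (m i : ℝ) * X₀ i) - ∑ i, (m₀ i : ℝ) * X₀ i) := by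
    intro m X
    rw [hφ]
    have h : ∀ i ∈ Finset.univ, ((m i : ℝ) - (m₀ i : ℝ)) * ((X - X₀) i)
        = ((m i : ℝ) * X i - (m₀ i : ℝ) * X i)
          - ((m i : ℝ) * X₀ i - (m₀ i : ℝ) * X₀ i) := by
      intro i _; simp only [Pi.sub_apply]; ring
    rw [Finset.sum_congr rfl h, Finset.sum_sub_distrib, Finset.sum_sub_distrib,
      Finset.sum_sub_distrib]
  -- Claim A: the cell is contained in the affine subspace through X₀ with direction K
  have hsub : ∀ X, AX X = S → X - X₀ ∈ K := by
    intro X hX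
    rw [memK]
    intro m hm
    have h1 : v m + ∑ i, (m i : ℝ) * X i = trop X :=
      ((hmem X m).mp (by rw [hX]; exact hm)).2
    have h1' : v m₀ + ∑ i, (m₀ i : ℝ) * X i = trop X :=
      ((hmem X m₀).mp (by rw [hX]; exact hm₀)).2
    have h2 : v m + ∑ i, (m i : ℝ) * X₀ i = trop X₀ := ((hmem X₀ m).mp hm).2
    rw [hkey]; linarith
  -- Converse: points of the subspace satisfying the strict inequalities are in the cell
  have hAXeq : ∀ X, X - X₀ ∈ K →
      (∀ m ∈ A, m ∉ S → v m + ∑ i, (m i : ℝ) * X i < v m₀ + ∑ i, (m₀ i : ℝ) * X i) →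
      AX X = S := by
    intro X hXK hlt
    have hSeq : ∀ m ∈ S, v m + ∑ i, (m i : ℝ) * X i = v m₀ + ∑ i, (m₀ i : ℝ) * X i := by
      intro m hm
      have h0 := (memK _).mp hXK m hm
      rw [hkey] at h0
      have h2 : v m + ∑ i, (m i : ℝ) * X₀ i = trop X₀ := ((hmem X₀ m).mp hm).2
      linarith
    have htropX : trop X = v m₀ + ∑ i, (m₀ i : ℝ) * X i := by
      rw [htrop]
      apply le_antisymm
      · apply Finset.sup'_le
        intro m hm
        by_cases hmS : m ∈ S
        · exact le_of_eq (hSeq m hmS)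
        · exact le_of_lt (hlt m hm hmS)
      · exact Finset.le_sup' (fun m => v m + ∑ i, (m i : ℝ) * X i) hm₀A
    ext m
    rw [hmem]
    constructor
    · rintro ⟨hmA, hmax⟩
      by_contra hmS
      have := hlt m hmA hmS
      rw [htropX] at hmax; linarith
    · intro hm
      exact ⟨((hmem X₀ m).mp hm).1, by rw [htropX]; exact hSeq m hm⟩
  set μ : Set (Fin (n + 1) → ℝ) := {X | AX X = S} with hμ
  have hX₀μ : X₀ ∈ μ := by simp only [hμ, Set.mem_setOf_eq]; rfl
  -- Claim B : K is contained in the direction of the affine span of the cell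
  have hdirK : K ≤ (affineSpan ℝ μ).direction := by
    intro d hd
    have hcont : ∀ m' : Fin (n + 1) → ℤ,
        Continuous fun t : ℝ => v m' + ∑ i, (m' i : ℝ) * ((X₀ + t • d) i) := by
      intro m'
      simp only [Pi.add_apply, Pi.smul_apply, smul_eq_mul]
      fun_prop
    have hev : ∀ᶠ t : ℝ in nhds 0, ∀ m ∈ A, m ∉ S →
        v m + ∑ i, (m i : ℝ) * ((X₀ + t • d) i)
          < v m₀ + ∑ i, (m₀ i : ℝ) * ((X₀ + t • d) i) := by
      rw [Filter.eventually_all_finset]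
      intro m hmA
      by_cases hmS : m ∈ S
      · exact Filter.Eventually.of_forall fun t h => absurd hmS h
      · have hlt0 : v m + ∑ i, (m i : ℝ) * ((X₀ + (0:ℝ) • d) i)
            < v m₀ + ∑ i, (m₀ i : ℝ) * ((X₀ + (0:ℝ) • d) i) := by
          have hne : v m + ∑ i, (m i : ℝ) * X₀ i ≠ trop X₀ := by
            intro h
            exact hmS ((hmem X₀ m).mpr ⟨hmA, h⟩)
          have hle' := hle X₀ m hmA
          have : (X₀ + (0:ℝ) • d) = X₀ := by simp
          rw [this, hm₀max]
          exact lt_of_le_of_ne hle' hne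
        have := (hcont m).continuousAt.eventually_lt (hcont m₀).continuousAt hlt0
        exact this.mono fun t h _ => h
    have hne0 : ∀ᶠ t : ℝ in nhdsWithin 0 {(0:ℝ)}ᶜ, t ≠ 0 :=
      eventually_mem_nhdsWithin.mono fun t ht => ht
    obtain ⟨t, htP, ht0⟩ :=
      ((hev.filter_mono nhdsWithin_le_nhds).and hne0).exists
    have hXd : (X₀ + t • d) - X₀ ∈ K := by
      have h : (X₀ + t • d) - X₀ = t • d := by abel
      rw [h]; exact K.smul_mem t hd
    have hXμ : (X₀ + t • d) ∈ μ := hAXeq (X₀ + t • d) hXd htP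
    have h1 : (X₀ + t • d) ∈ affineSpan ℝ μ := subset_affineSpan ℝ μ hXμ
    have h2 : X₀ ∈ affineSpan ℝ μ := subset_affineSpan ℝ μ hX₀μ
    have h3 : (X₀ + t • d) -ᵥ X₀ ∈ (affineSpan ℝ μ).direction :=
      AffineSubspace.vsub_mem_direction h1 h2
    have h4 : (X₀ + t • d) -ᵥ X₀ = t • d := by
      rw [vsub_eq_sub]; abel
    rw [h4] at h3
    have h5 := Submodule.smul_mem _ t⁻¹ h3
    rwa [smul_smul, inv_mul_cancel₀ ht0, one_smul] at h5
  -- Claim C : the direction equals K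
  have hspanle : affineSpan ℝ μ ≤ AffineSubspace.mk' X₀ K := by
    rw [affineSpan_le]
    intro X hX
    rw [SetLike.mem_coe, AffineSubspace.mem_mk', vsub_eq_sub]
    exact hsub X hX
  have hdir : (affineSpan ℝ μ).direction = K := by
    refine le_antisymm ?_ hdirK
    have h := AffineSubspace.direction_le hspanle
    rwa [AffineSubspace.direction_mk'] at h
  have hgoal : Module.finrank ℝ
      (affineSpan ℝ {X : Fin (n + 1) → ℝ | AX X = S}).direction
      = Module.finrank ℝ K := by rw [← hμ, hdir]
  rw [hgoal]
  -- dimension count via dual spaces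
  haveI : Fintype ((S : Set (Fin (n + 1) → ℤ))) := FinsetCoe.fintype S
  set i₀ : (S : Set (Fin (n + 1) → ℤ)) := ⟨m₀, hm₀⟩ with hi₀
  have hli : LinearIndependent ℝ
      (fun x : {x : (S : Set (Fin (n + 1) → ℤ)) // x ≠ i₀} =>
        (fun i => (((x : (S : Set (Fin (n + 1) → ℤ))) : Fin (n + 1) → ℤ) i : ℝ))
          -ᵥ fun i => ((m₀ i : ℝ))) :=
    (affineIndependent_iff_linearIndependent_vsub ℝ
      (fun m : (S : Set (Fin (n + 1) → ℤ)) => fun i => ((m : Fin (n + 1) → ℤ) i : ℝ))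
      i₀).mp (hindep X₀)
  set B := Pi.basisFun ℝ (Fin (n + 1)) with hB
  have hφdual : ∀ m : Fin (n + 1) → ℤ,
      φ m = B.toDual ((fun i => (m i : ℝ)) - fun i => (m₀ i : ℝ)) := by
    intro m
    apply B.ext
    intro j
    rw [Module.Basis.toDual_eq_repr]
    rw [hφ]
    simp only [hB, Pi.basisFun_repr, Pi.basisFun_apply, Pi.sub_apply]
    rw [Finset.sum_eq_single j]
    · simp
    · intro i _ hij
      simp [Pi.single_apply, hij]
    · intro h
      exact absurd (Finset.mem_univ j) h
  set Φ : {x : (S : Set (Fin (n + 1) → ℤ)) // x ≠ i₀} →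
      Module.Dual ℝ (Fin (n + 1) → ℝ) :=
    fun x => φ ((x : (S : Set (Fin (n + 1) → ℤ))) : Fin (n + 1) → ℤ) with hΦ
  have hliΦ : LinearIndependent ℝ Φ := by
    have h := hli.map' B.toDualEquiv.toLinearMap B.toDualEquiv.ker
    have he : Φ = fun x : {x : (S : Set (Fin (n + 1) → ℤ)) // x ≠ i₀} =>
        B.toDualEquiv.toLinearMap
          ((fun i => (((x : (S : Set (Fin (n + 1) → ℤ))) : Fin (n + 1) → ℤ) i : ℝ))
            -ᵥ fun i => ((m₀ i : ℝ))) := by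
      funext x
      show φ _ = _
      rw [hφdual]
      rw [vsub_eq_sub]
      rfl
    rw [he]
    exact h
  have hspan : K = (Submodule.span ℝ (Set.range Φ)).dualCoannihilator := by
    ext Y
    rw [memK, ← SetLike.mem_coe, Submodule.coe_dualCoannihilator_span]
    simp only [Set.mem_setOf_eq]
    constructor
    · rintro h f ⟨x, rfl⟩
      exact h _ (x : (S : Set (Fin (n + 1) → ℤ))).2
    · intro h m hm
      by_cases hmm : m = m₀
      · subst hmm
        rw [hφ]; simp
      · have hx : (⟨m, hm⟩ : (S : Set (Fin (n + 1) → ℤ))) ≠ i₀ := by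
          rw [hi₀]
          simp only [ne_eq, Subtype.mk.injEq]
          exact hmm
        exact h (Φ ⟨⟨m, hm⟩, hx⟩) ⟨_, rfl⟩
  have hdim := Subspace.finrank_add_finrank_dualCoannihilator_eq
    (Submodule.span ℝ (Set.range Φ))
  rw [Module.finrank_fin_fun] at hdim
  have hsr : Module.finrank ℝ (Submodule.span ℝ (Set.range Φ))
      = Fintype.card {x : (S : Set (Fin (n + 1) → ℤ)) // x ≠ i₀} :=
    finrank_span_eq_card hliΦ
  have hcard : Fintype.card {x : (S : Set (Fin (n + 1) → ℤ)) // x ≠ i₀}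
      = S.card - 1 := by
    have h1 : Fintype.card {x : (S : Set (Fin (n + 1) → ℤ)) // ¬ (x = i₀)}
        = Fintype.card ((S : Set (Fin (n + 1) → ℤ)))
          - Fintype.card {x : (S : Set (Fin (n + 1) → ℤ)) // x = i₀} :=
      Fintype.card_subtype_compl _
    have h2 : Fintype.card {x : (S : Set (Fin (n + 1) → ℤ)) // x = i₀} = 1 :=
      Fintype.card_subtype_eq i₀
    have h3 : Fintype.card ((S : Set (Fin (n + 1) → ℤ))) = S.card := by
      exact (Fintype.card_congr (Equiv.subtypeEquivRight fun x => Finset.mem_coe)).trans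
        (Fintype.card_coe S)
    rw [h1, h2, h3]
  have hcardpos : 1 ≤ S.card := Finset.card_pos.mpr hSne'
  rw [hsr, hcard] at hdim
  rw [hspan]
  omega
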